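/- If A is a d-th order n-dimensional real tensor such that the 2d-th order tensor A⊗A (outer product of A with itself) is super-symmetric, then A itself is super-symmetric. -/
import Mathlib


/-- A tensor indexed by `ι → n` is super-symmetric if its entries are invariant
under any permutation of the index positions. -/
def SuperSym {ι n : Type*} (A : (ι → n) → ℝ) : Prop :=
  ∀ (σ : Equiv.Perm ι) (i : ι → n), A (i ∘ σ) = A i

/-- If `A ⊗ A` (a 2d-th order tensor) is super-symmetric, then `A` is super-symmetric. -/
theorem stmt0 {d n : ℕ} (A : (Fin d → Fin n) → ℝ)
    (h : SuperSym (fun i : Fin d ⊕ Fin d → Fin n => A (i ∘ Sum.inl) * A (i ∘ Sum.inr))) :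
    SuperSym A := by
  intro σ i
  by_cases hA : ∀ j, A j = 0
  · simp [hA]
  · push_neg at hA
    obtain ⟨j, hj⟩ := hA
    have key := h (Equiv.sumCongr σ (Equiv.refl _)) (Sum.elim i j)
    have h1 : ((Sum.elim i j ∘ ⇑(Equiv.sumCongr σ (Equiv.refl (Fin d)))) ∘ Sum.inl)
        = i ∘ σ := rfl
    have h2 : ((Sum.elim i j ∘ ⇑(Equiv.sumCongr σ (Equiv.refl (Fin d)))) ∘ Sum.inr)
        = j := rfl
    simp only [h1, h2] at key
    have h3 : (Sum.elim i j ∘ Sum.inl) = i := rfl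
    have h4 : (Sum.elim i j ∘ Sum.inr) = j := rfl
    rw [h3, h4] at key
    exact mul_right_cancel₀ hj key
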